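/- Let M and M̂ be simple graphs on the vertex set {1,…,n}, and let v : ℝⁿ → ℝⁿ be a C¹ diffeomorphism. Suppose that for every ordered pair of distinct indices (k, l) with k and l not adjacent in M̂, every pair of indices i, j adjacent in M, and every x ∈ ℝⁿ, we have (∂v_i/∂x_k)(x) · (∂v_j/∂x_l)(x) = 0. Then there exists a permutation π of {1,…,n} such that whenever i and j are adjacent in M, π(i) and π(j) are adjacent in M̂. -/

import Mathlib

/-- The (i,j) entry of the Jacobian of `f` at `x`: the j-th partial derivative
of the i-th component of `f`. -/
noncomputable def pd {n : ℕ} (f : (Fin n → ℝ) → (Fin n → ℝ)) (i j : Fin n)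
    (x : Fin n → ℝ) : ℝ :=
  fderiv ℝ f x (Pi.single j 1) i

theorem exists_perm_adj_preserving
    {n : ℕ} (M Mhat : SimpleGraph (Fin n))
    (v w : (Fin n → ℝ) → (Fin n → ℝ))
    (hv : ContDiff ℝ 1 v) (hw : ContDiff ℝ 1 w)
    (hleft : Function.LeftInverse w v) (hright : Function.RightInverse w v)
    (h2 : ∀ k l : Fin n, k ≠ l → ¬ Mhat.Adj k l →
      ∀ i j : Fin n, M.Adj i j →
      ∀ x : Fin n → ℝ, pd v i k x * pd v j l x = 0) :
    ∃ π : Equiv.Perm (Fin n), ∀ i j : Fin n, M.Adj i j → Mhat.Adj (π i) (π j) := by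
  have hvd : Differentiable ℝ v := hv.differentiable one_ne_zero
  have hwd : Differentiable ℝ w := hw.differentiable one_ne_zero
  set A : (Fin n → ℝ) →L[ℝ] (Fin n → ℝ) := fderiv ℝ v 0 with hA
  set B : (Fin n → ℝ) →L[ℝ] (Fin n → ℝ) := fderiv ℝ w (v 0) with hB
  have hcomp : HasFDerivAt (w ∘ v) (B.comp A) 0 :=
    ((hwd (v 0)).hasFDerivAt).comp 0 ((hvd 0).hasFDerivAt)
  have hid : HasFDerivAt (w ∘ v) (ContinuousLinearMap.id ℝ (Fin n → ℝ)) 0 := by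
    have h : w ∘ v = id := funext hleft
    rw [h]; exact hasFDerivAt_id 0
  have hBA : B.comp A = ContinuousLinearMap.id ℝ (Fin n → ℝ) := hcomp.unique hid
  set MA : Matrix (Fin n) (Fin n) ℝ :=
    LinearMap.toMatrix' (A : (Fin n → ℝ) →ₗ[ℝ] (Fin n → ℝ)) with hMA
  set MB : Matrix (Fin n) (Fin n) ℝ :=
    LinearMap.toMatrix' (B : (Fin n → ℝ) →ₗ[ℝ] (Fin n → ℝ)) with hMB
  have hmul : MB * MA = 1 := by
    rw [hMA, hMB, ← LinearMap.toMatrix'_comp]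
    have h : (B : (Fin n → ℝ) →ₗ[ℝ] (Fin n → ℝ)).comp
        (A : (Fin n → ℝ) →ₗ[ℝ] (Fin n → ℝ)) = LinearMap.id :=
      LinearMap.ext fun x =>
        congrArg (fun f : (Fin n → ℝ) →L[ℝ] (Fin n → ℝ) => f x) hBA
    rw [h, LinearMap.toMatrix'_id]
  have hdet : MA.det ≠ 0 := by
    intro h
    have h1 := congrArg Matrix.det hmul
    rw [Matrix.det_mul, h, mul_zero, Matrix.det_one] at h1
    exact zero_ne_one h1
  have hentry : ∀ i k, MA i k = pd v i k 0 := by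
    intro i k
    rw [hMA, LinearMap.toMatrix'_apply]
    unfold pd
    rw [← hA]
    have hfun : (fun j => if j = k then (1:ℝ) else 0) = Pi.single k (1:ℝ) := by
      ext j
      simp [Pi.single_apply]
    rfl
  have hex : ∃ σ : Equiv.Perm (Fin n), ∀ k, MA (σ k) k ≠ 0 := by
    by_contra h
    push_neg at h
    apply hdet
    rw [Matrix.det_apply]
    apply Finset.sum_eq_zero
    intro σ _
    obtain ⟨k, hk⟩ := h σ
    have hp : ∏ i, MA (σ i) i = 0 := Finset.prod_eq_zero (Finset.mem_univ k) hk
    rw [hp]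
    simp
  obtain ⟨σ, hσ⟩ := hex
  refine ⟨σ⁻¹, fun i j hij => ?_⟩
  by_contra hadj
  have hne : σ⁻¹ i ≠ σ⁻¹ j := fun h => M.ne_of_adj hij (σ⁻¹.injective h)
  have hzero := h2 (σ⁻¹ i) (σ⁻¹ j) hne hadj i j hij 0
  have h1 : pd v i (σ⁻¹ i) 0 ≠ 0 := by
    rw [← hentry]
    have := hσ (σ⁻¹ i)
    rwa [show σ (σ⁻¹ i) = i from σ.apply_symm_apply i] at this
  have h2' : pd v j (σ⁻¹ j) 0 ≠ 0 := by
    rw [← hentry]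
    have := hσ (σ⁻¹ j)
    rwa [show σ (σ⁻¹ j) = j from σ.apply_symm_apply j] at this
  exact mul_ne_zero h1 h2' hzero
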